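/- Let K be a compact Hausdorff space, A ⊆ C(K;ℝ) a vector sublattice containing the constant function 1 and separating the points of K. If K is zero-dimensional, then for every clopen set U ⊆ K, the characteristic function χ(U) belongs to A; consequently F(K) ⊆ A. -/

import Mathlib

open Classical in

theorem stmt_10 {K : Type*} [TopologicalSpace K] [CompactSpace K] [T2Space K]
    (hbasis : TopologicalSpace.IsTopologicalBasis {U : Set K | IsClopen U})
    (A : Set C(K, ℝ))
    (hadd : ∀ f ∈ A, ∀ g ∈ A, f + g ∈ A)
    (hsmul : ∀ (c : ℝ), ∀ f ∈ A, c • f ∈ A)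
    (hsup : ∀ f ∈ A, ∀ g ∈ A, f ⊔ g ∈ A)
    (hinf : ∀ f ∈ A, ∀ g ∈ A, f ⊓ g ∈ A)
    (hone : ContinuousMap.const K 1 ∈ A)
    (hsep : ∀ x y : K, x ≠ y → ∃ f ∈ A, f x ≠ f y) :
    (∀ U : Set K, IsClopen U →
      ∃ f ∈ A, ∀ x : K, f x = if x ∈ U then (1 : ℝ) else 0) ∧
    (∀ f : C(K, ℝ), (Set.range f).Finite → f ∈ A) := by
  -- constants belong to A
  have hconst : ∀ c : ℝ, ContinuousMap.const K c ∈ A := by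
    intro c
    have h := hsmul c _ hone
    convert h using 1
    ext x; simp
  -- finite infima and suprema stay in A
  have hinf' : ∀ (s : Finset K) (g : K → C(K, ℝ)) (H : s.Nonempty),
      (∀ i ∈ s, g i ∈ A) → s.inf' H g ∈ A := by
    intro s g H hg
    induction H using Finset.Nonempty.cons_induction with
    | singleton a => simpa using hg a (by simp)
    | cons a s ha hs ih =>
      rw [Finset.inf'_cons hs]
      exact hinf _ (hg a (by simp)) _ (ih fun i hi => hg i (Finset.mem_cons_of_mem hi))
  have hsup' : ∀ (s : Finset K) (g : K → C(K, ℝ)) (H : s.Nonempty),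
      (∀ i ∈ s, g i ∈ A) → s.sup' H g ∈ A := by
    intro s g H hg
    induction H using Finset.Nonempty.cons_induction with
    | singleton a => simpa using hg a (by simp)
    | cons a s ha hs ih =>
      rw [Finset.sup'_cons hs]
      exact hsup _ (hg a (by simp)) _ (ih fun i hi => hg i (Finset.mem_cons_of_mem hi))
  -- the key: characteristic functions of clopen sets
  have key : ∀ U : Set K, IsClopen U →
      ∃ f ∈ A, ∀ x : K, f x = if x ∈ U then (1 : ℝ) else 0 := by
    intro U hU
    rcases Set.eq_empty_or_nonempty U with rfl | hUne
    · exact ⟨ContinuousMap.const K 0, hconst 0, fun x => by simp⟩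
    rcases Set.eq_empty_or_nonempty Uᶜ with hUc | hUcne
    · refine ⟨ContinuousMap.const K 1, hone, fun x => ?_⟩
      have hx : x ∈ U := by
        by_contra hx
        have : x ∈ Uᶜ := hx
        rw [hUc] at this
        exact this
      simp [hx]
    -- step 1: two-point separation with values 1 and 0
    have step1 : ∀ x ∈ U, ∀ y ∈ Uᶜ, ∃ g ∈ A, g x = 1 ∧ g y = 0 := by
      intro x hx y hy
      have hxy : x ≠ y := fun h => hy (h ▸ hx)
      obtain ⟨f, hfA, hf⟩ := hsep x y hxy
      have hne : f x - f y ≠ 0 := sub_ne_zero.mpr hf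
      refine ⟨(f x - f y)⁻¹ • (f + (-(f y)) • ContinuousMap.const K 1),
        hsmul _ _ (hadd f hfA _ (hsmul _ _ hone)), ?_, ?_⟩
      · simp only [ContinuousMap.smul_apply, ContinuousMap.add_apply,
          ContinuousMap.const_apply, smul_eq_mul]
        field_simp
        ring
      · simp only [ContinuousMap.smul_apply, ContinuousMap.add_apply,
          ContinuousMap.const_apply, smul_eq_mul]
        ring
    -- step 2: for each x ∈ U, a function equal to 1 at x and < 1/3 on Uᶜ
    have step2 : ∀ x ∈ U, ∃ h ∈ A, h x = 1 ∧ ∀ z ∈ Uᶜ, h z < 1/3 := by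
      intro x hx
      choose! g hgA hgx hgy using step1 x hx
      set g' : K → C(K, ℝ) := fun y => if y ∈ Uᶜ then g y else ContinuousMap.const K 1 with hg'
      have hg'A : ∀ y, g' y ∈ A := by
        intro y
        by_cases hy : y ∈ Uᶜ
        · rw [hg']; simp only; rw [if_pos hy]; exact hgA y hy
        · rw [hg']; simp only; rw [if_neg hy]; exact hone
      have hg'x : ∀ y, g' y x = 1 := by
        intro y
        by_cases hy : y ∈ Uᶜ
        · rw [hg']; simp only; rw [if_pos hy]; exact hgx y hy
        · rw [hg']; simp only; rw [if_neg hy]; rfl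
      have hg'y : ∀ y ∈ Uᶜ, g' y y = 0 := by
        intro y hy
        rw [hg']; simp only; rw [if_pos hy]; exact hgy y hy
      have hcomp : IsCompact Uᶜ := (hU.2.isClosed_compl).isCompact
      have hcover : Uᶜ ⊆ ⋃ y : K, {z | g' y z < 1/3} := by
        intro z hz
        refine Set.mem_iUnion.mpr ⟨z, ?_⟩
        simp only [Set.mem_setOf_eq, hg'y z hz]
        norm_num
      obtain ⟨t, ht⟩ := hcomp.elim_finite_subcover (fun y => {z | g' y z < 1/3})
        (fun y => isOpen_lt (g' y).continuous continuous_const) hcover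
      obtain ⟨z₀, hz₀⟩ := hUcne
      have hz₀' := ht hz₀
      rw [Set.mem_iUnion₂] at hz₀'
      obtain ⟨y₀, hy₀t, _⟩ := hz₀'
      have Ht : t.Nonempty := ⟨y₀, hy₀t⟩
      refine ⟨t.inf' Ht g', hinf' t g' Ht (fun i _ => hg'A i), ?_, ?_⟩
      · rw [ContinuousMap.inf'_apply]
        rw [Finset.inf'_congr Ht rfl (fun y _ => hg'x y)]
        exact Finset.inf'_const _ _
      · intro z hz
        have := ht hz
        rw [Set.mem_iUnion₂] at this
        obtain ⟨y, hyt, hyz⟩ := this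
        calc (t.inf' Ht g') z ≤ g' y z := by
              rw [ContinuousMap.inf'_apply]
              exact Finset.inf'_le (fun i => (g' i) z) hyt
          _ < 1/3 := hyz
    -- step 3: a function > 2/3 on U and < 1/3 on Uᶜ
    have step3 : ∃ f ∈ A, (∀ z ∈ U, 2/3 < f z) ∧ ∀ z ∈ Uᶜ, f z < 1/3 := by
      choose! h hhA hhx hhy using step2
      set h' : K → C(K, ℝ) := fun x => if x ∈ U then h x else ContinuousMap.const K 0 with hh'
      have hh'A : ∀ x, h' x ∈ A := by
        intro x
        by_cases hx : x ∈ U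
        · rw [hh']; simp only; rw [if_pos hx]; exact hhA x hx
        · rw [hh']; simp only; rw [if_neg hx]; exact hconst 0
      have hh'y : ∀ x, ∀ z ∈ Uᶜ, h' x z < 1/3 := by
        intro x z hz
        by_cases hx : x ∈ U
        · rw [hh']; simp only; rw [if_pos hx]; exact hhy x hx z hz
        · rw [hh']; simp only; rw [if_neg hx]
          show (0:ℝ) < 1/3
          norm_num
      have hcomp : IsCompact U := hU.1.isCompact
      have hcover : U ⊆ ⋃ x : K, {z | 2/3 < h' x z} := by
        intro z hz
        refine Set.mem_iUnion.mpr ⟨z, ?_⟩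
        show 2/3 < h' z z
        rw [hh']; simp only; rw [if_pos hz, hhx z hz]
        norm_num
      obtain ⟨s, hs⟩ := hcomp.elim_finite_subcover (fun x => {z | 2/3 < h' x z})
        (fun x => isOpen_lt continuous_const (h' x).continuous) hcover
      obtain ⟨x₀, hx₀⟩ := hUne
      have hx₀' := hs hx₀
      rw [Set.mem_iUnion₂] at hx₀'
      obtain ⟨y₀, hy₀s, _⟩ := hx₀'
      have Hs : s.Nonempty := ⟨y₀, hy₀s⟩
      refine ⟨s.sup' Hs h', hsup' s h' Hs (fun i _ => hh'A i), ?_, ?_⟩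
      · intro z hz
        have := hs hz
        rw [Set.mem_iUnion₂] at this
        obtain ⟨x, hxs, hxz⟩ := this
        calc (2:ℝ)/3 < h' x z := hxz
          _ ≤ (s.sup' Hs h') z := by
              rw [ContinuousMap.sup'_apply]
              exact Finset.le_sup' (fun i => (h' i) z) hxs
      · intro z hz
        rw [ContinuousMap.sup'_apply, Finset.sup'_lt_iff]
        exact fun x _ => hh'y x z hz
    -- step 4: truncate
    obtain ⟨f, hfA, hfU, hfUc⟩ := step3
    refine ⟨((3:ℝ) • f + (-1:ℝ) • ContinuousMap.const K 1) ⊓ ContinuousMap.const K 1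
        ⊔ ContinuousMap.const K 0, ?_, ?_⟩
    · exact hsup _ (hinf _ (hadd _ (hsmul 3 f hfA) _ (hsmul (-1) _ hone)) _ (hconst 1))
        _ (hconst 0)
    · intro z
      simp only [ContinuousMap.sup_apply, ContinuousMap.inf_apply, ContinuousMap.add_apply,
        ContinuousMap.smul_apply, ContinuousMap.const_apply, smul_eq_mul]
      by_cases hz : z ∈ U
      · have h1 : (2:ℝ)/3 < f z := hfU z hz
        rw [if_pos hz]
        rw [min_eq_right (by linarith), max_eq_left (by norm_num)]
      · have h1 : f z < 1/3 := hfUc z hz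
        rw [if_neg hz]
        rw [min_eq_left (by linarith), max_eq_right (by linarith)]
  refine ⟨key, ?_⟩
  -- finite-range functions
  have hzero : (0 : C(K, ℝ)) ∈ A := by
    have h : ContinuousMap.const K (0:ℝ) = 0 := by ext x; simp
    rw [← h]; exact hconst 0
  have hsum : ∀ (s : Finset ℝ) (F : ℝ → C(K, ℝ)),
      (∀ c ∈ s, F c ∈ A) → (∑ c ∈ s, F c) ∈ A := by
    intro s F hF
    induction s using Finset.cons_induction with
    | empty => simpa using hzero
    | cons a s ha ih =>
      rw [Finset.sum_cons]
      exact hadd _ (hF a (by simp)) _ (ih fun c hc => hF c (Finset.mem_cons_of_mem hc))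
  intro f hfin
  have hclopen : ∀ c : ℝ, IsClopen (f ⁻¹' {c}) := by
    intro c
    refine ⟨IsClosed.preimage f.continuous isClosed_singleton, ?_⟩
    rw [← isClosed_compl_iff]
    have heq : (f ⁻¹' {c})ᶜ = f ⁻¹' (Set.range f \ {c}) := by
      ext z
      simp [Set.mem_preimage, Set.mem_range]
    rw [heq]
    exact IsClosed.preimage f.continuous ((hfin.subset Set.diff_subset).isClosed)
  choose g hgA hgval using fun c => key (f ⁻¹' {c}) (hclopen c)
  have hfeq : f = ∑ c ∈ hfin.toFinset, c • g c := by
    ext z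
    rw [ContinuousMap.sum_apply]
    rw [Finset.sum_eq_single (f z)]
    · simp [hgval (f z) z]
    · intro c _ hc
      have : z ∉ f ⁻¹' {c} := by simp [Set.mem_preimage]; exact fun h => hc h.symm
      simp [hgval c z, this]
    · intro h
      exact absurd (hfin.mem_toFinset.mpr ⟨z, rfl⟩) h
  rw [hfeq]
  exact hsum _ _ fun c _ => hsmul c _ (hgA c)
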